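/- arXiv:1709.09139 — 3 statements merged into one kernel-verified Lean document; each statement's English description precedes it below -/
import Mathlib

section
/- Let g be the 4-dimensional Lie algebra with brackets [e1,e2]=e2-λe3, [e1,e3]=λe2+e3, [e1,e4]=2e4, [e2,e3]=-e4, endowed with the metric making (e1/2, e2, e3, e4) orthonormal, and let J be the almost complex structure defined by Je1=-2e4, Je2=e3, Je3=-e2, Je4=e1/2. Then the Nijenhuis tensor of J vanishes, i.e., J is integrable. -/
/-- The bracket [e1,e2]=e2-λe3, [e1,e3]=λe2+e3, [e1,e4]=2e4, [e2,e3]=-e4. -/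
def br (lam : ℝ) (X Y : Fin 4 → ℝ) : Fin 4 → ℝ :=
  ![0,
    (X 0 * Y 1 - X 1 * Y 0) + lam * (X 0 * Y 2 - X 2 * Y 0),
    -lam * (X 0 * Y 1 - X 1 * Y 0) + (X 0 * Y 2 - X 2 * Y 0),
    2 * (X 0 * Y 3 - X 3 * Y 0) - (X 1 * Y 2 - X 2 * Y 1)]

/-- The almost complex structure Je1=-2e4, Je2=e3, Je3=-e2, Je4=(1/2)e1. -/
noncomputable def Jmap (X : Fin 4 → ℝ) : Fin 4 → ℝ :=
  ![(1 / 2) * X 3, -X 2, X 1, -2 * X 0]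

/-- the Nijenhuis tensor of J vanishes, i.e. J is integrable. -/
theorem stmt_4 (lam : ℝ) (X Y : Fin 4 → ℝ) :
    br lam (Jmap X) (Jmap Y) - Jmap (br lam (Jmap X) Y) - Jmap (br lam X (Jmap Y))
      - br lam X Y = 0 := by
  funext i
  fin_cases i <;> simp [br, Jmap] <;> ring
end

section
/- Let g be the 4-dimensional Lie algebra with brackets [e1,e2]=e2-λe3, [e1,e3]=λe2+e3, [e1,e4]=2e4, [e2,e3]=-e4. The endomorphism J defined by Je1=-2e4, Je2=e3, Je3=-e2, Je4=(1/2)e1 satisfies J²=-Id, and the 2-form ω(X,Y)=g(JX,Y), where g is the metric making (e1/2,e2,e3,e4) orthonormal, equals -2e^{14}+e^{23} and is closed. -/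
/-- The metric making (e1/2, e2, e3, e4) orthonormal, i.e. g(e1,e1)=4. -/
def gmet (X Y : Fin 4 → ℝ) : ℝ :=
  4 * (X 0 * Y 0) + X 1 * Y 1 + X 2 * Y 2 + X 3 * Y 3

/-- J² = -Id, the form ω(X,Y)=g(JX,Y) equals -2e^{14}+e^{23}, and ω is
closed for the Chevalley–Eilenberg differential. -/
theorem stmt_5 (lam : ℝ) :
    (∀ X : Fin 4 → ℝ, Jmap (Jmap X) = -X) ∧
    (∀ X Y : Fin 4 → ℝ, gmet (Jmap X) Y =
      -2 * (X 0 * Y 3 - X 3 * Y 0) + (X 1 * Y 2 - X 2 * Y 1)) ∧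
    (∀ X Y Z : Fin 4 → ℝ,
      -(gmet (Jmap (br lam X Y)) Z) + gmet (Jmap (br lam X Z)) Y
        - gmet (Jmap (br lam Y Z)) X = 0) := by
  refine ⟨fun X => ?_, fun X Y => ?_, fun X Y Z => ?_⟩
  · funext i; fin_cases i <;> simp [Jmap]
  · simp [Jmap, gmet]; ring
  · simp [Jmap, gmet, br]; ring
end

section
/- Every almost-Kähler structure on the 4-dimensional Lie algebra with brackets [e1,e2]=e2-λe3, [e1,e3]=λe2+e3, [e1,e4]=2e4, [e2,e3]=-e4, whose metric makes ((1/k)e1, e2, e3, e4) orthonormal for some k>0 and whose fundamental 2-form is compatible with the orientation -k e^{1234}, is Kähler. Concretely: if ω is a closed 2-form, J an endomorphism with J²=-Id, g the metric above, ω(·,·)=g(J·,·), g(J·,J·)=g(·,·), and ω∧ω = -2k e^{1234} up to positive scale, then k=2, ω = ∓2e^{14}±e^{23}, and the Nijenhuis tensor of J vanishes. -/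
/-- The metric making ((1/k)e1, e2, e3, e4) orthonormal, i.e. g(e1,e1)=k². -/
def gk (k : ℝ) (X Y : Fin 4 → ℝ) : ℝ :=
  k ^ 2 * (X 0 * Y 0) + X 1 * Y 1 + X 2 * Y 2 + X 3 * Y 3

/-- basis vectors -/
def E (i : Fin 4) : Fin 4 → ℝ := Pi.single i 1

set_option maxHeartbeats 1000000 in
/-- every almost-Kähler structure (ω,J,g) on this Lie algebra with
g making ((1/k)e1,e2,e3,e4) orthonormal (k>0), ω(·,·)=g(J·,·) closed, J²=-Id,
J g-orthogonal, and ω∧ω a positive multiple of -2k e^{1234}, satisfies k=2,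
ω = ∓2e^{14} ± e^{23}, and has vanishing Nijenhuis tensor (hence is Kähler). -/
theorem stmt_11 (lam k : ℝ) (hk : 0 < k)
    (J : (Fin 4 → ℝ) →ₗ[ℝ] (Fin 4 → ℝ))
    (hJ2 : ∀ X : Fin 4 → ℝ, J (J X) = -X)
    (horth : ∀ X Y : Fin 4 → ℝ, gk k (J X) (J Y) = gk k X Y)
    (hclosed : ∀ X Y Z : Fin 4 → ℝ,
      -(gk k (J (br lam X Y)) Z) + gk k (J (br lam X Z)) Y
        - gk k (J (br lam Y Z)) X = 0)
    (horient : ∃ t : ℝ, 0 < t ∧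
      (∑ σ : Equiv.Perm (Fin 4), ((Equiv.Perm.sign σ : ℤ) : ℝ) *
        gk k (J (E (σ 0))) (E (σ 1)) * gk k (J (E (σ 2))) (E (σ 3)))
        = t * (-2 * k)) :
    k = 2 ∧
    ((∀ X Y : Fin 4 → ℝ, gk k (J X) Y =
        -2 * (X 0 * Y 3 - X 3 * Y 0) + (X 1 * Y 2 - X 2 * Y 1)) ∨
     (∀ X Y : Fin 4 → ℝ, gk k (J X) Y =
        2 * (X 0 * Y 3 - X 3 * Y 0) - (X 1 * Y 2 - X 2 * Y 1))) ∧
    (∀ X Y : Fin 4 → ℝ,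
      br lam (J X) (J Y) - J (br lam (J X) Y) - J (br lam X (J Y)) - br lam X Y = 0) := by
  have hEv : ∀ i j : Fin 4, E i j = if i = j then 1 else 0 := by
    intro i j; simp [E, Pi.single_apply, eq_comm]
  have hJX : ∀ (X : Fin 4 → ℝ) (l : Fin 4), J X l =
      X 0 * J (E 0) l + X 1 * J (E 1) l + X 2 * J (E 2) l + X 3 * J (E 3) l := by
    intro X l
    have h : X = X 0 • E 0 + X 1 • E 1 + X 2 • E 2 + X 3 • E 3 := by
      funext i; fin_cases i <;> simp [E, Pi.single_apply]
    conv_lhs => rw [h]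
    simp [mul_comm]
  have hgJ : ∀ X Y : Fin 4 → ℝ, gk k (J X) Y =
      k ^ 2 * ((X 0 * J (E 0) 0 + X 1 * J (E 1) 0 + X 2 * J (E 2) 0 + X 3 * J (E 3) 0) * Y 0)
      + (X 0 * J (E 0) 1 + X 1 * J (E 1) 1 + X 2 * J (E 2) 1 + X 3 * J (E 3) 1) * Y 1
      + (X 0 * J (E 0) 2 + X 1 * J (E 1) 2 + X 2 * J (E 2) 2 + X 3 * J (E 3) 2) * Y 2
      + (X 0 * J (E 0) 3 + X 1 * J (E 1) 3 + X 2 * J (E 2) 3 + X 3 * J (E 3) 3) * Y 3 := by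
    intro X Y
    simp only [gk]
    rw [hJX X 0, hJX X 1, hJX X 2, hJX X 3]
  have hD : ∀ i l : Fin 4,
      J (E i) 0 * J (E 0) l + J (E i) 1 * J (E 1) l + J (E i) 2 * J (E 2) l
        + J (E i) 3 * J (E 3) l = -(E i l) := by
    intro i l
    rw [← hJX (J (E i)) l, hJ2 (E i)]
    simp
  have hasy : ∀ X Y : Fin 4 → ℝ, gk k (J X) Y = -(gk k (J Y) X) := by
    intro X Y
    have h1 := horth X (J Y)
    rw [hJ2 Y] at h1
    simp only [gk, Pi.neg_apply] at h1 ⊢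
    linear_combination -h1
  -- antisymmetry relations
  have A00 := hasy (E 0) (E 0)
  have A11 := hasy (E 1) (E 1)
  have A22 := hasy (E 2) (E 2)
  have A33 := hasy (E 3) (E 3)
  have A10 := hasy (E 1) (E 0)
  have A20 := hasy (E 2) (E 0)
  have A30 := hasy (E 3) (E 0)
  have A21 := hasy (E 2) (E 1)
  have A31 := hasy (E 3) (E 1)
  have A32 := hasy (E 3) (E 2)
  simp only [hgJ] at A00 A11 A22 A33 A10 A20 A30 A21 A31 A32
  simp [hEv] at A00 A11 A22 A33 A10 A20 A30 A21 A31 A32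
  have hk2 : (0:ℝ) < k ^ 2 := by positivity
  have A00d : J (E 0) 0 = 0 := by
    have h : k ^ 2 * J (E 0) 0 = 0 := by linarith [A00]
    exact (mul_eq_zero.mp h).resolve_left (by positivity)
  have A11d : J (E 1) 1 = 0 := by linarith [A11]
  have A22d : J (E 2) 2 = 0 := by linarith [A22]
  have A33d : J (E 3) 3 = 0 := by linarith [A33]
  -- closedness relations
  have C1 := hclosed (E 0) (E 1) (E 2)
  have C2 := hclosed (E 0) (E 1) (E 3)
  have C3 := hclosed (E 0) (E 2) (E 3)
  simp only [hgJ] at C1 C2 C3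
  simp [br, hEv] at C1 C2 C3
  -- J² = -1 diagonal equations
  have D00 := hD 0 0
  have D11 := hD 1 1
  have D33 := hD 3 3
  simp [hEv] at D00 D11 D33
  -- derive the values
  have h13 : J (E 1) 3 = 0 := by
    have h9 : (9 + lam ^ 2) * J (E 1) 3 = 0 := by
      linear_combination (-3 : ℝ) * C2 - lam * C3 + 6 * A31 + 2 * lam * A32
    exact (mul_eq_zero.mp h9).resolve_left (by positivity)
  have h23 : J (E 2) 3 = 0 := by
    have h9 : (9 + lam ^ 2) * J (E 2) 3 = 0 := by
      linear_combination lam * C2 - 3 * C3 - 2 * lam * A31 + 6 * A32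
    exact (mul_eq_zero.mp h9).resolve_left (by positivity)
  have hsum : J (E 0) 1 ^ 2 + J (E 0) 2 ^ 2 = 0 := by
    linear_combination (-(k ^ 2)) * D00 + k ^ 2 * D33 + J (E 0) 1 * A10 + J (E 0) 2 * A20
      + (k ^ 2 * J (E 0) 0) * A00d + (-(k ^ 2 * J (E 3) 3)) * A33d
      + (-(k ^ 2 * J (E 3) 1)) * h13 + (-(k ^ 2 * J (E 3) 2)) * h23
  have h01 : J (E 0) 1 = 0 := by
    have h1 : J (E 0) 1 ^ 2 = 0 := by nlinarith [sq_nonneg (J (E 0) 2)]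
    exact sq_eq_zero_iff.mp h1
  have h02 : J (E 0) 2 = 0 := by
    have h1 : J (E 0) 2 ^ 2 = 0 := by nlinarith [sq_nonneg (J (E 0) 1)]
    exact sq_eq_zero_iff.mp h1
  have hp2 : J (E 1) 2 * J (E 1) 2 = 1 := by
    linear_combination (-1 : ℝ) * D11 + J (E 1) 2 * A21 + J (E 1) 0 * h01
      + J (E 1) 1 * A11d + J (E 3) 1 * h13
  have hC1' : k ^ 2 * J (E 3) 0 = 2 * J (E 1) 2 := by
    linear_combination C1 - lam * A22d - lam * A11d - A21
  have h30d : J (E 3) 0 * J (E 0) 3 = -1 := by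
    linear_combination D33 - J (E 3) 1 * h13 - J (E 3) 2 * h23 - J (E 3) 3 * A33d
  have ha03 : J (E 0) 3 = -2 * J (E 1) 2 := by
    linear_combination A30 - hC1'
  have hk4 : k ^ 2 = 4 := by
    linear_combination (-(J (E 0) 3)) * hC1' + k ^ 2 * h30d - 2 * J (E 1) 2 * ha03 + 4 * hp2
  have hkk : k = 2 := by
    have h : (k - 2) * (k + 2) = 0 := by linear_combination hk4
    rcases mul_eq_zero.mp h with h | h
    · linarith
    · linarith
  have ha30 : J (E 3) 0 = J (E 1) 2 / 2 := by
    linear_combination (1/4 : ℝ) * hC1' - (J (E 3) 0 / 4) * hk4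
  have h10 : J (E 1) 0 = 0 := by
    linear_combination (1/4 : ℝ) * A10 - (J (E 1) 0 / 4) * hk4 - (1/4 : ℝ) * h01
  have h20 : J (E 2) 0 = 0 := by
    linear_combination (1/4 : ℝ) * A20 - (J (E 2) 0 / 4) * hk4 - (1/4 : ℝ) * h02
  have ha31 : J (E 3) 1 = 0 := by linear_combination A31 - h13
  have ha32 : J (E 3) 2 = 0 := by linear_combination A32 - h23
  -- component formulas for J
  have hJc0 : ∀ X : Fin 4 → ℝ, J X 0 = X 3 * (J (E 1) 2 / 2) := by
    intro X; rw [hJX X 0, A00d, h10, h20, ha30]; ring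
  have hJc1 : ∀ X : Fin 4 → ℝ, J X 1 = -(X 2 * J (E 1) 2) := by
    intro X; rw [hJX X 1, h01, A11d, A21, ha31]; ring
  have hJc2 : ∀ X : Fin 4 → ℝ, J X 2 = X 1 * J (E 1) 2 := by
    intro X; rw [hJX X 2, h02, A22d, ha32]; ring
  have hJc3 : ∀ X : Fin 4 → ℝ, J X 3 = -(X 0 * (2 * J (E 1) 2)) := by
    intro X; rw [hJX X 3, h13, h23, A33d, ha03]; ring
  subst hkk
  refine ⟨rfl, ?_, ?_⟩
  · rcases mul_self_eq_one_iff.mp hp2 with hp | hp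
    · left
      intro X Y
      rw [hgJ X Y, A00d, h10, h20, ha30, h01, A11d, A21, ha31, h02, A22d, ha32,
        h13, h23, A33d, ha03, hp]
      ring
    · right
      intro X Y
      rw [hgJ X Y, A00d, h10, h20, ha30, h01, A11d, A21, ha31, h02, A22d, ha32,
        h13, h23, A33d, ha03, hp]
      ring
  · rcases mul_self_eq_one_iff.mp hp2 with hp | hp <;>
    · simp only [hp] at hJc0 hJc1 hJc2 hJc3
      intro X Y
      funext l
      fin_cases l <;>
        simp only [Pi.sub_apply, Pi.zero_apply] <;>
        (simp [br, hJc0, hJc1, hJc2, hJc3]; try ring)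
end
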